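/- For all h ≥ 1 and k ≥ 1, every deterministic k-way branching program of depth at most 2^h that solves the decision tree evaluation problem BT^h_2(k) is thrifty. -/

import Mathlib

/-! Framework: the tree evaluation problem and deterministic k-way branching programs.

The balanced binary tree of height `h` has nodes numbered heap-style `1, …, 2^h - 1`:
the root is node `1` and the children of node `i` are `2i` and `2i+1`.
Elements of `[k] = {1,…,k}` are represented by `Fin k` (the element `1 ∈ [k]`
corresponds to `(0 : Fin k)`). -/

/-- Node `i` is a leaf of the height-`h` balanced binary tree. -/
def IsLeafNode (h i : ℕ) : Prop := 2 ^ (h - 1) ≤ i ∧ i < 2 ^ h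

/-- Node `i` is an internal node of the height-`h` balanced binary tree. -/
def IsInternalNode (h i : ℕ) : Prop := 1 ≤ i ∧ i < 2 ^ (h - 1)

/-- An input to the height-`h` tree evaluation problem over `[k]`: a binary function on `[k]`
for each internal node and a value in `[k]` for each leaf (values at irrelevant indices
are ignored). -/
structure TEInput (h k : ℕ) where
  f : ℕ → Fin k → Fin k → Fin k
  leaf : ℕ → Fin k

/-- Auxiliary recursion (on fuel) computing node values. -/
def TEInput.valAux {h k : ℕ} (I : TEInput h k) : ℕ → ℕ → Fin k
  | 0, i => I.leaf i
  | m + 1, i =>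
      if 2 ^ (h - 1) ≤ i then I.leaf i
      else I.f i (I.valAux m (2 * i)) (I.valAux m (2 * i + 1))

/-- The value `v_i^I` of node `i`: the leaf value if `i` is a leaf, and
`f_i^I (v_{2i}^I, v_{2i+1}^I)` if `i` is an internal node. -/
def TEInput.val {h k : ℕ} (I : TEInput h k) (i : ℕ) : Fin k := I.valAux h i

/-- The input variables of the tree evaluation problem: one variable `f_i(a,b)` for each
internal node `i` and `a b ∈ [k]`, and one variable `l_i` for each leaf `i`. -/
inductive TEVar (h k : ℕ) where
  | internal (i : ℕ) (hi : IsInternalNode h i) (a b : Fin k) : TEVar h k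
  | leaf (i : ℕ) (hi : IsLeafNode h i) : TEVar h k

/-- The value of a variable under an input. -/
def TEInput.evalVar {h k : ℕ} (I : TEInput h k) : TEVar h k → Fin k
  | .internal i _ a b => I.f i a b
  | .leaf i _ => I.leaf i

/-- The node a variable belongs to. -/
def TEVar.node {h k : ℕ} : TEVar h k → ℕ
  | .internal i _ _ _ => i
  | .leaf i _ => i

/-- `X` is the thrifty `i` variable of input `I`: it is `f_i(v_{2i}^I, v_{2i+1}^I)`
if `i` is an internal node, and `l_i` if `i` is a leaf. -/
def IsThriftyVarOf {h k : ℕ} (I : TEInput h k) (i : ℕ) : TEVar h k → Prop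
  | .internal j _ a b => j = i ∧ a = I.val (2 * j) ∧ b = I.val (2 * j + 1)
  | .leaf j _ => j = i

/-- A deterministic `k`-way branching program with variables indexed by `V` and
output set `R`: a set of states (of cardinality `size`), a start state, each state
labeled either with a variable to query (non-output states, with `k` out-edges
labeled `1,…,k`) or with an output value (output sink states). -/
structure DetBP (V : Type) (k : ℕ) (R : Type) where
  size : ℕ
  start : Fin size
  label : Fin size → V ⊕ R
  next : Fin size → Fin k → Fin size

namespace DetBP

variable {V : Type} {k : ℕ} {R : Type}

/-- One step of computation on input `x`: from a state querying variable `v`, follow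
the out-edge labeled `x v`; output states are sinks. -/
def step (B : DetBP V k R) (x : V → Fin k) (s : Fin B.size) : Fin B.size :=
  match B.label s with
  | .inl v => B.next s (x v)
  | .inr _ => s

/-- The state of the computation path of `x` at time `t`. -/
def run (B : DetBP V k R) (x : V → Fin k) (t : ℕ) : Fin B.size :=
  (B.step x)^[t] B.start

/-- The depth of `B` is at most `D`: on every input, the computation path reaches an
output state within its first `D` states. -/
def DepthLE (B : DetBP V k R) (D : ℕ) : Prop :=
  ∀ x : V → Fin k, ∃ t < D, (B.label (B.run x t)).isRight = true

/-- `B` solves the function tree evaluation problem `FT^h_2(k)`: on every input `I`, the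
computation path ends in the output state labeled with the root value `v_1^I`. -/
def SolvesFT {h : ℕ} (B : DetBP (TEVar h k) k (Fin k)) : Prop :=
  ∀ I : TEInput h k, ∃ t, B.label (B.run I.evalVar t) = Sum.inr (I.val 1)

/-- `B` solves the decision tree evaluation problem `BT^h_2(k)`: on every input `I`, the
computation path ends in the output state labeled with whether `v_1^I = 1`
(the element `1 ∈ [k]` being `(0 : Fin k)`). -/
def SolvesBT {h : ℕ} (B : DetBP (TEVar h k) k Bool) : Prop :=
  ∀ I : TEInput h k, ∃ t, B.label (B.run I.evalVar t) = Sum.inr (decide ((I.val 1 : Fin k).val = 0))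

/-- `B` is thrifty: on every input `I`, every query `f_i(a,b)` made along the computation
path of `I` satisfies `a = v_{2i}^I` and `b = v_{2i+1}^I`. -/
def Thrifty {h : ℕ} (B : DetBP (TEVar h k) k R) : Prop :=
  ∀ (I : TEInput h k) (t i : ℕ) (hi : IsInternalNode h i) (a b : Fin k),
    B.label (B.run I.evalVar t) = Sum.inl (TEVar.internal i hi a b) →
    a = I.val (2 * i) ∧ b = I.val (2 * i + 1)

end DetBP

namespace ThriftyProofAux

variable {h k : ℕ}

/-- `p` lies in the subtree rooted at `i` (heap numbering). -/
def InSub (i p : ℕ) : Prop := ∃ m, p / 2 ^ m = i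

lemma inSub_self (i : ℕ) : InSub i i := ⟨0, by simp⟩

lemma inSub_le {i p : ℕ} (h' : InSub i p) : i ≤ p := by
  obtain ⟨m, rfl⟩ := h'; exact Nat.div_le_self _ _

lemma inSub_left {i p : ℕ} (h' : InSub (2 * i) p) : InSub i p := by
  obtain ⟨m, hm⟩ := h'
  refine ⟨m + 1, ?_⟩
  rw [pow_succ, ← Nat.div_div_eq_div_mul, hm]
  omega

lemma inSub_right {i p : ℕ} (h' : InSub (2 * i + 1) p) : InSub i p := by
  obtain ⟨m, hm⟩ := h'
  refine ⟨m + 1, ?_⟩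
  rw [pow_succ, ← Nat.div_div_eq_div_mul, hm]
  omega

lemma sib_disjoint {q p : ℕ} (hq : 1 ≤ q) (h1 : InSub (2 * q) p)
    (h2 : InSub (2 * q + 1) p) : False := by
  obtain ⟨m, hm⟩ := h1
  obtain ⟨m', hm'⟩ := h2
  rcases lt_trichotomy m m' with hlt | rfl | hlt
  · have he : p / 2 ^ m' = (p / 2 ^ m) / 2 ^ (m' - m) := by
      rw [Nat.div_div_eq_div_mul, ← pow_add]
      congr 2
      omega
    rw [hm, hm'] at he
    have h2d : 2 ≤ 2 ^ (m' - m) := by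
      calc 2 = 2 ^ 1 := rfl
        _ ≤ 2 ^ (m' - m) := Nat.pow_le_pow_right (by omega) (by omega)
    have hle : (2 * q) / 2 ^ (m' - m) ≤ (2 * q) / 2 := Nat.div_le_div_left h2d (by omega)
    omega
  · rw [hm] at hm'; omega
  · have he : p / 2 ^ m = (p / 2 ^ m') / 2 ^ (m - m') := by
      rw [Nat.div_div_eq_div_mul, ← pow_add]
      congr 2
      omega
    rw [hm, hm'] at he
    have h2d : 2 ≤ 2 ^ (m - m') := by
      calc 2 = 2 ^ 1 := rfl
        _ ≤ 2 ^ (m - m') := Nat.pow_le_pow_right (by omega) (by omega)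
    have hle : (2 * q + 1) / 2 ^ (m - m') ≤ (2 * q + 1) / 2 := Nat.div_le_div_left h2d (by omega)
    omega

lemma valAux_succ (I : TEInput h k) (m i : ℕ) :
    I.valAux (m + 1) i =
      if 2 ^ (h - 1) ≤ i then I.leaf i
      else I.f i (I.valAux m (2 * i)) (I.valAux m (2 * i + 1)) := rfl

lemma valAux_stab1 (I : TEInput h k) :
    ∀ m i, 2 ^ (h - 1) ≤ i * 2 ^ m → I.valAux (m + 1) i = I.valAux m i := by
  intro m
  induction m with
  | zero =>
    intro i hi
    simp only [pow_zero, mul_one] at hi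
    rw [valAux_succ, if_pos hi]
    rfl
  | succ m ih =>
    intro i hi
    rw [valAux_succ I (m+1) i, valAux_succ I m i]
    by_cases hleaf : 2 ^ (h - 1) ≤ i
    · rw [if_pos hleaf, if_pos hleaf]
    · rw [if_neg hleaf, if_neg hleaf,
        ih (2 * i) (by rw [show 2 * i * 2 ^ m = i * 2 ^ (m + 1) by ring]; exact hi),
        ih (2 * i + 1) (by
          have : 2 * i * 2 ^ m ≤ (2 * i + 1) * 2 ^ m := Nat.mul_le_mul_right _ (by omega)
          rw [show 2 * i * 2 ^ m = i * 2 ^ (m + 1) by ring] at this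
          omega)]

lemma val_leaf (I : TEInput h k) (hh : 1 ≤ h) {i : ℕ} (hi : 2 ^ (h - 1) ≤ i) :
    I.val i = I.leaf i := by
  unfold TEInput.val
  obtain ⟨h', rfl⟩ : ∃ h', h = h' + 1 := ⟨h - 1, by omega⟩
  rw [valAux_succ, if_pos (by simpa using hi)]

lemma val_internal (I : TEInput h k) (hh : 1 ≤ h) {i : ℕ} (h1 : 1 ≤ i) (h2 : i < 2 ^ (h - 1)) :
    I.val i = I.f i (I.val (2 * i)) (I.val (2 * i + 1)) := by
  unfold TEInput.val
  obtain ⟨h', rfl⟩ : ∃ h', h = h' + 1 := ⟨h - 1, by omega⟩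
  simp only [Nat.add_sub_cancel] at h2 ⊢
  rw [valAux_succ]
  simp only [Nat.add_sub_cancel]
  rw [if_neg (by omega)]
  rw [show I.valAux (h' + 1) (2 * i) = I.valAux h' (2 * i) from
      valAux_stab1 I h' (2 * i) (by simp only [Nat.add_sub_cancel]; exact Nat.le_mul_of_pos_left _ (by omega)),
    show I.valAux (h' + 1) (2 * i + 1) = I.valAux h' (2 * i + 1) from
      valAux_stab1 I h' (2 * i + 1) (by simp only [Nat.add_sub_cancel]; exact Nat.le_mul_of_pos_left _ (by omega))]

lemma valAux_congr (I J : TEInput h k) :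
    ∀ m i, (∀ p, InSub i p → J.f p = I.f p) → (∀ p, InSub i p → J.leaf p = I.leaf p) →
      J.valAux m i = I.valAux m i := by
  intro m
  induction m with
  | zero =>
    intro i hf hl
    exact hl i (inSub_self i)
  | succ m ih =>
    intro i hf hl
    rw [valAux_succ J m i, valAux_succ I m i]
    by_cases hc : 2 ^ (h - 1) ≤ i
    · rw [if_pos hc, if_pos hc, hl i (inSub_self i)]
    · rw [if_neg hc, if_neg hc, hf i (inSub_self i),
        ih (2 * i) (fun p hp => hf p (inSub_left hp)) (fun p hp => hl p (inSub_left hp)),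
        ih (2 * i + 1) (fun p hp => hf p (inSub_right hp)) (fun p hp => hl p (inSub_right hp))]

lemma val_congr (I J : TEInput h k) (i : ℕ)
    (hf : ∀ p, InSub i p → J.f p = I.f p) (hl : ∀ p, InSub i p → J.leaf p = I.leaf p) :
    J.val i = I.val i := valAux_congr I J h i hf hl

end ThriftyProofAux
namespace ThriftyProofAux

variable {h k : ℕ} {V R : Type}

lemma run_succ (B : DetBP V k R) (x : V → Fin k) (t : ℕ) :
    B.run x (t + 1) = B.step x (B.run x t) :=
  Function.iterate_succ_apply' _ _ _

lemma run_agree (B : DetBP V k R) (x y : V → Fin k) (t : ℕ)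
    (H : ∀ τ, τ < t → ∀ v, B.label (B.run x τ) = Sum.inl v → y v = x v) :
    ∀ τ, τ ≤ t → B.run y τ = B.run x τ := by
  intro τ
  induction τ with
  | zero => intro _; rfl
  | succ τ ih =>
    intro hτ
    rw [run_succ, run_succ, ih (by omega)]
    unfold DetBP.step
    cases hl : B.label (B.run x τ) with
    | inl v => simp only [hl, H τ (by omega) v hl]
    | inr r => simp only [hl]

lemma run_absorb (B : DetBP V k R) (x : V → Fin k) {T : ℕ} {r : R}
    (hT : B.label (B.run x T) = Sum.inr r) :
    ∀ t, T ≤ t → B.run x t = B.run x T := by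
  intro t ht
  induction t, ht using Nat.le_induction with
  | base => rfl
  | succ t ht ih =>
    rw [run_succ, ih]
    unfold DetBP.step
    simp only [hT]

/-- A "bit-diverse" correction map: `Mmap vp vc` maps `vc` to `vp`, and maps
inputs of distinct bit-classes to outputs of distinct bit-classes. -/
def Mmap [NeZero k] (vp vc c : Fin k) : Fin k :=
  if decide (vp = 0) = decide (vc = 0) then (if c = vc then vp else c)
  else (if decide (c = 0) = decide (vc = 0) then vp else vc)

lemma Mmap_thrifty [NeZero k] (vp vc : Fin k) : Mmap vp vc vc = vp := by
  unfold Mmap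
  split
  · rw [if_pos rfl]
  · rw [if_pos rfl]

lemma Mmap_bit [NeZero k] (vp vc c : Fin k) :
    decide (Mmap vp vc c = 0) =
      if decide (vp = 0) = decide (vc = 0) then decide (c = 0) else !decide (c = 0) := by
  unfold Mmap
  by_cases h1 : decide (vp = 0) = decide (vc = 0)
  · rw [if_pos h1, if_pos h1]
    by_cases h2 : c = vc
    · rw [if_pos h2, h1, h2]
    · rw [if_neg h2]
  · rw [if_neg h1, if_neg h1]
    by_cases h2 : decide (c = 0) = decide (vc = 0)
    · rw [if_pos h2]
      cases hb : decide (vp = 0) <;> cases hb2 : decide (vc = 0) <;> cases hb3 : decide (c = 0) <;> simp_all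
    · rw [if_neg h2]
      cases hb : decide (c = 0) <;> cases hb2 : decide (vc = 0) <;> simp_all

/-- The structured "adversary" input built from `I0`: it has the same node values as
`I0`, but its rows and columns through the thrifty points are bit-diverse. -/
def hatI [NeZero k] (I0 : TEInput h k) : TEInput h k where
  f := fun p c w =>
    if w = I0.val (2 * p + 1) then Mmap (I0.val p) (I0.val (2 * p)) c
    else if c = I0.val (2 * p) then Mmap (I0.val p) (I0.val (2 * p + 1)) w
    else I0.f p c w
  leaf := I0.leaf

lemma hat_row [NeZero k] (I0 : TEInput h k) (p : ℕ) (c : Fin k) :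
    (hatI I0).f p c (I0.val (2 * p + 1)) = Mmap (I0.val p) (I0.val (2 * p)) c := by
  simp [hatI]

lemma hat_col [NeZero k] (I0 : TEInput h k) (p : ℕ) (w : Fin k) :
    (hatI I0).f p (I0.val (2 * p)) w = Mmap (I0.val p) (I0.val (2 * p + 1)) w := by
  by_cases hw : w = I0.val (2 * p + 1)
  · rw [hw, Mmap_thrifty]
    show (hatI I0).f p (I0.val (2 * p)) (I0.val (2 * p + 1)) = _
    rw [hat_row, Mmap_thrifty]
  · show (if w = I0.val (2 * p + 1) then _ else if (I0.val (2*p)) = I0.val (2 * p) then _ else _) = _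
    rw [if_neg hw, if_pos rfl]

lemma hat_val_aux [NeZero k] (I0 : TEInput h k) (hh : 1 ≤ h) :
    ∀ m j, 1 ≤ j → 2 ^ (h - 1) ≤ j * 2 ^ m → (hatI I0).val j = I0.val j := by
  intro m
  induction m with
  | zero =>
    intro j hj hcond
    simp only [pow_zero, mul_one] at hcond
    rw [val_leaf _ hh hcond, val_leaf _ hh hcond]
    rfl
  | succ m ih =>
    intro j hj hcond
    by_cases hleaf : 2 ^ (h - 1) ≤ j
    · rw [val_leaf _ hh hleaf, val_leaf _ hh hleaf]; rfl
    · have hb : j < 2 ^ (h - 1) := by omega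
      rw [val_internal _ hh hj hb, val_internal I0 hh hj hb]
      rw [ih (2 * j) (by omega) (by rw [show 2 * j * 2 ^ m = j * 2 ^ (m + 1) by ring]; exact hcond),
        ih (2 * j + 1) (by omega) (by
          have : 2 * j * 2 ^ m ≤ (2 * j + 1) * 2 ^ m := Nat.mul_le_mul_right _ (by omega)
          rw [show 2 * j * 2 ^ m = j * 2 ^ (m + 1) by ring] at this
          omega)]
      rw [hat_row, Mmap_thrifty]
      exact val_internal I0 hh hj hb

lemma hat_val [NeZero k] (I0 : TEInput h k) (hh : 1 ≤ h) (j : ℕ) (hj : 1 ≤ j) :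
    (hatI I0).val j = I0.val j := by
  refine hat_val_aux I0 hh h j hj ?_
  calc 2 ^ (h - 1) ≤ 2 ^ h := Nat.pow_le_pow_right (by omega) (by omega)
    _ ≤ j * 2 ^ h := Nat.le_mul_of_pos_left _ (by omega)

end ThriftyProofAux
namespace ThriftyProofAux

variable {h k : ℕ}

/-- The bit of the value of node `i` can be set to either value by modifying only
unqueried variables inside the subtree of `i`. -/
def FlexP [NeZero k] (B : DetBP (TEVar h k) k Bool) (Ih : TEInput h k) (T i : ℕ) : Prop :=
  ∀ β : Bool, ∃ J : TEInput h k,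
    (∀ τ, τ < T → ∀ v, B.label (B.run Ih.evalVar τ) = Sum.inl v → J.evalVar v = Ih.evalVar v) ∧
    (∀ p, ¬ InSub i p → J.f p = Ih.f p) ∧
    (∀ p, ¬ InSub i p → J.leaf p = Ih.leaf p) ∧
    decide (J.val i = 0) = β

lemma fin_one_ne_zero [NeZero k] (hk2 : 2 ≤ k) : (⟨1, by omega⟩ : Fin k) ≠ 0 := by
  intro he
  have := congrArg Fin.val he
  simp at this

lemma flex_base_leaf [NeZero k] (hk2 : 2 ≤ k) (B : DetBP (TEVar h k) k Bool)
    (I0 : TEInput h k) (hh : 1 ≤ h) (T j0 : ℕ) (hj1 : 2 ^ (h - 1) ≤ j0)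
    (hmiss : ∀ τ, τ < T → ∀ v, B.label (B.run (hatI I0).evalVar τ) = Sum.inl v →
      ¬ IsThriftyVarOf (hatI I0) j0 v) :
    FlexP B (hatI I0) T j0 := by
  unfold FlexP
  intro β
  set tgt : Fin k := if β then 0 else ⟨1, by omega⟩ with htgt
  refine ⟨⟨(hatI I0).f, Function.update (hatI I0).leaf j0 tgt⟩, ?_, ?_, ?_, ?_⟩
  · intro τ hτ v hv
    cases v with
    | internal i hi a b => rfl
    | leaf i hlf =>
      have hne : i ≠ j0 := by
        intro he
        exact hmiss τ hτ _ hv (by simpa [IsThriftyVarOf] using he)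
      show Function.update (hatI I0).leaf j0 tgt i = (hatI I0).leaf i
      rw [Function.update_of_ne hne]
  · intro p _; rfl
  · intro p hp
    have hne : p ≠ j0 := fun he => hp (he ▸ inSub_self p)
    exact Function.update_of_ne hne _ _
  · rw [val_leaf _ hh hj1]
    show decide (Function.update (hatI I0).leaf j0 tgt j0 = 0) = β
    rw [Function.update_self]
    cases β
    · simp [htgt, fin_one_ne_zero hk2]
    · simp [htgt]

lemma flex_base_int [NeZero k] (hk2 : 2 ≤ k) (B : DetBP (TEVar h k) k Bool)
    (I0 : TEInput h k) (hh : 1 ≤ h) (T j0 : ℕ) (hj1 : 1 ≤ j0) (hj2 : j0 < 2 ^ (h - 1))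
    (hmiss : ∀ τ, τ < T → ∀ v, B.label (B.run (hatI I0).evalVar τ) = Sum.inl v →
      ¬ IsThriftyVarOf (hatI I0) j0 v) :
    FlexP B (hatI I0) T j0 := by
  unfold FlexP
  intro β
  set Ih := hatI I0 with hIh
  set tgt : Fin k := if β then 0 else ⟨1, by omega⟩ with htgt
  set F' : Fin k → Fin k → Fin k :=
    fun c w => if c = Ih.val (2 * j0) ∧ w = Ih.val (2 * j0 + 1) then tgt else Ih.f j0 c w with hF'
  refine ⟨⟨Function.update Ih.f j0 F', Ih.leaf⟩, ?_, ?_, ?_, ?_⟩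
  · intro τ hτ v hv
    cases v with
    | leaf i hlf => rfl
    | internal i hi a b =>
      show Function.update Ih.f j0 F' i a b = Ih.f i a b
      by_cases hij : i = j0
      · subst hij
        rw [Function.update_self]
        by_cases hab : a = Ih.val (2 * i) ∧ b = Ih.val (2 * i + 1)
        · exact absurd (show IsThriftyVarOf Ih i (TEVar.internal i hi a b) from
            ⟨rfl, hab.1, hab.2⟩) (hmiss τ hτ _ hv)
        · rw [hF']
          simp only [if_neg hab]
      · rw [Function.update_of_ne hij]
  · intro p hp
    have hne : p ≠ j0 := fun he => hp (he ▸ inSub_self p)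
    exact Function.update_of_ne hne _ _
  · intro p _; rfl
  · have hL : (⟨Function.update Ih.f j0 F', Ih.leaf⟩ : TEInput h k).val (2 * j0) = Ih.val (2 * j0) := by
      apply val_congr
      · intro p hps
        have : 2 * j0 ≤ p := inSub_le hps
        exact Function.update_of_ne (by omega) _ _
      · intro p _; rfl
    have hR : (⟨Function.update Ih.f j0 F', Ih.leaf⟩ : TEInput h k).val (2 * j0 + 1) = Ih.val (2 * j0 + 1) := by
      apply val_congr
      · intro p hps
        have : 2 * j0 + 1 ≤ p := inSub_le hps
        exact Function.update_of_ne (by omega) _ _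
      · intro p _; rfl
    rw [val_internal _ hh hj1 hj2]
    show decide (Function.update Ih.f j0 F' j0 _ _ = 0) = β
    rw [Function.update_self, hL, hR]
    have hFtgt : F' (Ih.val (2 * j0)) (Ih.val (2 * j0 + 1)) = tgt := by
      rw [hF']
      simp
    rw [hFtgt]
    cases β
    · simp [htgt, fin_one_ne_zero hk2]
    · simp [htgt]

lemma flex_step [NeZero k] (B : DetBP (TEVar h k) k Bool) (I0 : TEInput h k) (hh : 1 ≤ h)
    (T q : ℕ) (hq1 : 1 ≤ q) (hq2 : q < 2 ^ (h - 1)) (i : ℕ)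
    (hi : i = 2 * q ∨ i = 2 * q + 1) (hP : FlexP B (hatI I0) T i) :
    FlexP B (hatI I0) T q := by
  unfold FlexP at hP ⊢
  intro β
  rcases hi with rfl | rfl
  · -- i = 2q : left child
    obtain ⟨J, hA, hf, hl, hbit⟩ :=
      hP (if decide (I0.val q = 0) = decide (I0.val (2 * q) = 0) then β else !β)
    refine ⟨J, hA, fun p hp => hf p (fun hs => hp (inSub_left hs)),
      fun p hp => hl p (fun hs => hp (inSub_left hs)), ?_⟩
    have hfq : J.f q = (hatI I0).f q :=
      hf q (fun hs => by have := inSub_le hs; omega)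
    have hsib : J.val (2 * q + 1) = I0.val (2 * q + 1) := by
      rw [← hat_val I0 hh (2 * q + 1) (by omega)]
      apply val_congr
      · intro p hps; exact hf p (fun hs => sib_disjoint hq1 hs hps)
      · intro p hps; exact hl p (fun hs => sib_disjoint hq1 hs hps)
    have hv : J.val q = Mmap (I0.val q) (I0.val (2 * q)) (J.val (2 * q)) := by
      rw [val_internal J hh hq1 hq2, hfq, hsib, hat_row]
    rw [hv, Mmap_bit, hbit]
    by_cases hc : decide (I0.val q = 0) = decide (I0.val (2 * q) = 0) <;> simp [hc]
  · -- i = 2q + 1 : right child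
    obtain ⟨J, hA, hf, hl, hbit⟩ :=
      hP (if decide (I0.val q = 0) = decide (I0.val (2 * q + 1) = 0) then β else !β)
    refine ⟨J, hA, fun p hp => hf p (fun hs => hp (inSub_right hs)),
      fun p hp => hl p (fun hs => hp (inSub_right hs)), ?_⟩
    have hfq : J.f q = (hatI I0).f q :=
      hf q (fun hs => by have := inSub_le hs; omega)
    have hsib : J.val (2 * q) = I0.val (2 * q) := by
      rw [← hat_val I0 hh (2 * q) (by omega)]
      apply val_congr
      · intro p hps; exact hf p (fun hs => sib_disjoint hq1 hps hs)
      · intro p hps; exact hl p (fun hs => sib_disjoint hq1 hps hs)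
    have hv : J.val q = Mmap (I0.val q) (I0.val (2 * q + 1)) (J.val (2 * q + 1)) := by
      rw [val_internal J hh hq1 hq2, hfq, hsib, hat_col]
    rw [hv, Mmap_bit, hbit]
    by_cases hc : decide (I0.val q = 0) = decide (I0.val (2 * q + 1) = 0) <;> simp [hc]

lemma flex_up [NeZero k] (B : DetBP (TEVar h k) k Bool) (I0 : TEInput h k) (hh : 1 ≤ h) :
    ∀ i, 1 ≤ i → i < 2 ^ h → ∀ T, FlexP B (hatI I0) T i → FlexP B (hatI I0) T 1 := by
  intro i
  induction i using Nat.strong_induction_on with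
  | _ i ih =>
    intro hi1 hi2 T hP
    rcases eq_or_lt_of_le hi1 with h1 | h1
    · rwa [h1]
    · have hpow : 2 ^ h = 2 * 2 ^ (h - 1) := by
        conv_lhs => rw [show h = (h - 1) + 1 by omega]
        rw [pow_succ']
      have hq1 : 1 ≤ i / 2 := by omega
      have hq2 : i / 2 < 2 ^ (h - 1) := by omega
      have hpar : i = 2 * (i / 2) ∨ i = 2 * (i / 2) + 1 := by omega
      exact ih (i / 2) (by omega) hq1 (by omega) T
        (flex_step B I0 hh T (i / 2) hq1 hq2 i hpar hP)

end ThriftyProofAux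

namespace ThriftyProofAux

variable {h k : ℕ}

lemma thrifty_node {I : TEInput h k} {j : ℕ} {v : TEVar h k}
    (hv : IsThriftyVarOf I j v) : TEVar.node v = j := by
  cases v with
  | internal i hi a b => exact hv.1
  | leaf i hl => exact hv

lemma internal_bounds {i : ℕ} (hi : IsInternalNode h i) : 1 ≤ i ∧ i < 2 ^ (h - 1) := hi

end ThriftyProofAux


open ThriftyProofAux

/-- For all `h ≥ 1` and `k ≥ 1`, every deterministic `k`-way branching program
of depth at most `2^h` that solves `BT^h_2(k)` is thrifty. -/
theorem stmt_2 (h k : ℕ) (hh : 1 ≤ h) (hk : 1 ≤ k) (B : DetBP (TEVar h k) k Bool)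
    (hB : B.SolvesBT) (hdepth : B.DepthLE (2 ^ h)) : B.Thrifty := by
  classical
  haveI : NeZero k := ⟨by omega⟩
  intro I t i hi a b hlab
  by_contra hcon
  rcases Nat.lt_or_ge k 2 with hk1 | hk2
  · -- k = 1 : trivially thrifty
    have hk1' : k = 1 := by omega
    subst hk1'
    exact hcon ⟨Subsingleton.elim _ _, Subsingleton.elim _ _⟩
  -- minimal violation time
  have hBadEx : ∃ τ, ∃ I' : TEInput h k, ∃ i' : ℕ, ∃ hi' : IsInternalNode h i', ∃ a' b' : Fin k,
      B.label (B.run I'.evalVar τ) = Sum.inl (TEVar.internal i' hi' a' b') ∧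
      ¬(a' = I'.val (2 * i') ∧ b' = I'.val (2 * i' + 1)) := ⟨t, I, i, hi, a, b, hlab, hcon⟩
  obtain ⟨I0, i0, hi0, a0, b0, hX0, hnt⟩ := Nat.find_spec hBadEx
  have ht0min : ∀ τ, τ < Nat.find hBadEx →
      ∀ (I' : TEInput h k) (i' : ℕ) (hi' : IsInternalNode h i') (a' b' : Fin k),
      B.label (B.run I'.evalVar τ) = Sum.inl (TEVar.internal i' hi' a' b') →
      (a' = I'.val (2 * i') ∧ b' = I'.val (2 * i' + 1)) := by
    intro τ hτ I' i' hi' a' b' hlb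
    by_contra hc
    exact Nat.find_min hBadEx hτ ⟨I', i', hi', a', b', hlb, hc⟩
  -- the structured adversary input agrees with I0 along the prefix
  have hpref : ∀ τ, τ ≤ Nat.find hBadEx → B.run (hatI I0).evalVar τ = B.run I0.evalVar τ := by
    apply run_agree
    intro τ hτ v hv
    cases v with
    | leaf j hlf => rfl
    | internal j hj aa bb =>
      obtain ⟨haa, hbb⟩ := ht0min τ hτ I0 j hj aa bb hv
      subst haa
      subst hbb
      show (hatI I0).f j (I0.val (2 * j)) (I0.val (2 * j + 1))
          = I0.f j (I0.val (2 * j)) (I0.val (2 * j + 1))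
      rw [hat_row, Mmap_thrifty]
      exact val_internal I0 hh (internal_bounds hj).1 (internal_bounds hj).2
  -- the first output time T of the adversary input
  obtain ⟨tD, htD, htDr⟩ := hdepth (hatI I0).evalVar
  have hTex : ∃ T, (B.label (B.run (hatI I0).evalVar T)).isRight = true := ⟨tD, htDr⟩
  have hTspec : (B.label (B.run (hatI I0).evalVar (Nat.find hTex))).isRight = true :=
    Nat.find_spec hTex
  have hTmin : ∀ τ, τ < Nat.find hTex → ¬(B.label (B.run (hatI I0).evalVar τ)).isRight = true :=
    fun τ hτ => Nat.find_min hTex hτ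
  have hTle : Nat.find hTex ≤ 2 ^ h - 1 := by
    have h1 := Nat.find_min' hTex htDr
    omega
  obtain ⟨rT, hrT⟩ : ∃ r, B.label (B.run (hatI I0).evalVar (Nat.find hTex)) = Sum.inr r := by
    rcases hl : B.label (B.run (hatI I0).evalVar (Nat.find hTex)) with v | r
    · rw [hl] at hTspec
      simp at hTspec
    · exact ⟨r, rfl⟩
  have hX0Ih : B.label (B.run (hatI I0).evalVar (Nat.find hBadEx))
      = Sum.inl (TEVar.internal i0 hi0 a0 b0) := by
    rw [hpref _ le_rfl]
    exact hX0
  have ht0T : Nat.find hBadEx < Nat.find hTex := by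
    by_contra hge
    have habs := run_absorb B (hatI I0).evalVar hrT (Nat.find hBadEx) (by omega)
    rw [habs, hrT] at hX0Ih
    cases hX0Ih
  have hX0notthr : ∀ j : ℕ, ¬ IsThriftyVarOf (hatI I0) j (TEVar.internal i0 hi0 a0 b0) := by
    intro j hthr
    obtain ⟨-, h1, h2⟩ := hthr
    refine hnt ⟨?_, ?_⟩
    · rw [← hat_val I0 hh (2 * i0) (by have := (internal_bounds hi0).1; omega)]
      exact h1
    · rw [← hat_val I0 hh (2 * i0 + 1) (by omega)]
      exact h2
  by_cases hall : ∀ j, 1 ≤ j → j < 2 ^ h → ∃ τ, τ < Nat.find hTex ∧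
      ∃ v, B.label (B.run (hatI I0).evalVar τ) = Sum.inl v ∧ IsThriftyVarOf (hatI I0) j v
  · -- all thrifty variables are queried: counting contradiction
    choose! fτ hfτ using hall
    have hinj : Set.InjOn fτ (Finset.Ico 1 (2 ^ h)) := by
      intro j hj j' hj' he
      simp only [Finset.coe_Ico, Set.mem_Ico] at hj hj'
      obtain ⟨hlt, v, hv, hthr⟩ := hfτ j hj.1 hj.2
      obtain ⟨hlt', v', hv', hthr'⟩ := hfτ j' hj'.1 hj'.2
      rw [he] at hv
      rw [hv] at hv'
      have hvv : v = v' := Sum.inl.inj hv'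
      rw [← thrifty_node hthr, ← thrifty_node hthr', hvv]
    have hsub : insert (Nat.find hBadEx) ((Finset.Ico 1 (2 ^ h)).image fτ)
        ⊆ Finset.range (Nat.find hTex) := by
      intro x hx
      rcases Finset.mem_insert.mp hx with rfl | hx
      · exact Finset.mem_range.mpr ht0T
      · obtain ⟨j, hj, rfl⟩ := Finset.mem_image.mp hx
        simp only [Finset.mem_Ico] at hj
        exact Finset.mem_range.mpr (hfτ j hj.1 hj.2).1
    have ht0notin : Nat.find hBadEx ∉ (Finset.Ico 1 (2 ^ h)).image fτ := by
      intro hmem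
      obtain ⟨j, hj, hje⟩ := Finset.mem_image.mp hmem
      simp only [Finset.mem_Ico] at hj
      obtain ⟨hlt, v, hv, hthr⟩ := hfτ j hj.1 hj.2
      rw [hje, hX0Ih] at hv
      have hvv : TEVar.internal i0 hi0 a0 b0 = v := Sum.inl.inj hv
      rw [← hvv] at hthr
      exact hX0notthr j hthr
    have hcard := Finset.card_le_card hsub
    rw [Finset.card_insert_of_notMem ht0notin, Finset.card_image_of_injOn hinj,
      Nat.card_Ico, Finset.card_range] at hcard
    have h2h : 1 ≤ 2 ^ h := Nat.one_le_two_pow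
    omega
  · -- some thrifty variable is never queried: flexibility contradiction
    push_neg at hall
    obtain ⟨j0, hj0a, hj0b, hj0miss⟩ := hall
    have hbase : FlexP B (hatI I0) (Nat.find hTex) j0 := by
      by_cases hcase : j0 < 2 ^ (h - 1)
      · exact flex_base_int hk2 B I0 hh (Nat.find hTex) j0 hj0a hcase hj0miss
      · exact flex_base_leaf hk2 B I0 hh (Nat.find hTex) j0 (by omega) hj0miss
    have hflex := flex_up B I0 hh j0 hj0a hj0b (Nat.find hTex) hbase
    have key : ∀ J : TEInput h k,
        (∀ τ, τ < Nat.find hTex → ∀ v, B.label (B.run (hatI I0).evalVar τ) = Sum.inl v →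
          J.evalVar v = (hatI I0).evalVar v) →
        rT = decide ((J.val 1 : Fin k).val = 0) := by
      intro J hA
      have hrun : ∀ τ, τ ≤ Nat.find hTex → B.run J.evalVar τ = B.run (hatI I0).evalVar τ :=
        run_agree B (hatI I0).evalVar J.evalVar (Nat.find hTex) hA
      obtain ⟨tJ, htJ⟩ := hB J
      have htJT : Nat.find hTex ≤ tJ := by
        by_contra hlt
        have he := hrun tJ (by omega)
        rw [he] at htJ
        refine hTmin tJ (by omega) ?_
        rw [htJ]
        rfl
      have hJT : B.label (B.run J.evalVar (Nat.find hTex)) = Sum.inr rT := by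
        rw [hrun _ le_rfl]
        exact hrT
      have habs := run_absorb B J.evalVar hJT tJ htJT
      rw [habs, hJT] at htJ
      exact Sum.inr.inj htJ
    obtain ⟨J1, hA1, -, -, hb1⟩ := hflex true
    obtain ⟨J0, hA0, -, -, hb0⟩ := hflex false
    have hbv : ∀ x : Fin k, decide (x = 0) = decide ((x : Fin k).val = 0) := by
      intro x
      apply decide_eq_decide.mpr
      constructor
      · intro hx
        rw [hx]
        simp
      · intro hx
        apply Fin.ext
        rw [hx]
        simp
    have e1 := key J1 hA1
    have e0 := key J0 hA0
    rw [← hbv, hb1] at e1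
    rw [← hbv, hb0] at e0
    rw [e1] at e0
    exact Bool.noConfusion e0
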